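/- Let $R > 0$, $\xi \in (0,e^{-R})$ satisfy $R(1-\xi e^R) \ge K + \lambda^{-\eta}R$, and set $\gamma = 1-\xi$, $C = 4e^R(1+R)$. Under the uniformly expanding hypotheses (expansion constant $\lambda > 1$, distortion constant $K$, H\"older exponent $\eta \in (0,1]$), for every $\phi : Y \to \mathbb{R}$ with $|\phi|_\eta < \infty$ and $\int_Y \phi\,dm = 0$, and every $n \ge 1$: $\|P_m^n\phi\|_\eta \le C\gamma^n |\phi|_\eta$. -/

import Mathlib

open MeasureTheory

set_option maxHeartbeats 2000000 in
/-- Theorem 2.1 (with explicit constants): `‖P_m^n φ‖_η ≤ C γ^n |φ|_η` with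
`γ = 1-ξ` and `C = 4 e^R (1+R)`, for every Hölder `φ` of mean zero, where
`‖ψ‖_η = |ψ|_∞ + |ψ|_η` is expressed pointwise. -/
theorem uniformly_expanding_decay {Y : Type*} [MetricSpace Y] [MeasurableSpace Y]
    (m : Measure Y) [IsProbabilityMeasure m]
    (hdiam : ∀ x y : Y, dist x y ≤ 1)
    {ι : Type*} [Countable ι] (A : ι → Set Y)
    (F : Y → Y) (inv : ι → Y → Y)
    (hinv_mem : ∀ i y, inv i y ∈ A i)
    (hinv_right : ∀ i y, F (inv i y) = y)
    (hinv_left : ∀ i, ∀ x ∈ A i, inv i (F x) = x)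
    (ζ : Y → ℝ) (hζ : ∀ x, 0 < ζ x)
    (Λ K η R ξ : ℝ) (hΛ : 1 < Λ) (hK : 0 < K) (hη : η ∈ Set.Ioc (0:ℝ) 1)
    (hR : 0 < R) (hξ : ξ ∈ Set.Ioo 0 (Real.exp (-R)))
    (hRξ : K + Λ ^ (-η) * R ≤ R * (1 - ξ * Real.exp R))
    (hexp : ∀ i, ∀ x ∈ A i, ∀ y ∈ A i, Λ * dist x y ≤ dist (F x) (F y))
    (hdist : ∀ i, ∀ x ∈ A i, ∀ y ∈ A i,
      |Real.log (ζ x) - Real.log (ζ y)| ≤ K * dist (F x) (F y) ^ η)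
    (Pm : (Y → ℝ) → Y → ℝ)
    (hPm : ∀ (φ : Y → ℝ) (y : Y), Pm φ y = ∑' i, ζ (inv i y) * φ (inv i y))
    (hdual : ∀ φ : Y → ℝ, Integrable φ m → ∫ y, Pm φ y ∂m = ∫ y, φ y ∂m)
    (φ : Y → ℝ) (Hφ : ℝ) (hHφ : 0 ≤ Hφ)
    (hφ : ∀ x y : Y, |φ x - φ y| ≤ Hφ * dist x y ^ η)
    (hφint : Integrable φ m) (hmean : ∫ y, φ y ∂m = 0) :
    ∀ n : ℕ, 1 ≤ n → ∀ x z w : Y, z ≠ w →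
      |(Pm^[n] φ) x| + |(Pm^[n] φ) z - (Pm^[n] φ) w| / dist z w ^ η
        ≤ 4 * Real.exp R * (1 + R) * (1 - ξ) ^ n * Hφ := by
  obtain ⟨hη0, hη1⟩ := hη
  obtain ⟨hξ0, hξe⟩ := hξ
  have hΛ0 : (0:ℝ) < Λ := lt_trans one_pos hΛ
  have hΛη : (0:ℝ) < Λ ^ (-η) := Real.rpow_pos_of_pos hΛ0 _
  set R' : ℝ := K + Λ ^ (-η) * R with hR'def
  have hR'0 : 0 < R' := add_pos hK (mul_pos hΛη hR)
  have hξ1 : ξ < 1 := lt_of_lt_of_le hξe (by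
    have : Real.exp (-R) ≤ Real.exp 0 := Real.exp_le_exp.mpr (by linarith)
    simpa using this)
  have hexpR0 : (0:ℝ) < Real.exp R := Real.exp_pos R
  have hξeR : ξ * Real.exp R < 1 := by
    have h := mul_lt_mul_of_pos_right hξe hexpR0
    rwa [← Real.exp_add, neg_add_cancel, Real.exp_zero] at h
  have hR'R : R' ≤ R := le_trans hRξ (by nlinarith [mul_pos (mul_pos hξ0 hexpR0) hR])
  have ht01 : ∀ z w : Y, 0 ≤ dist z w ^ η ∧ dist z w ^ η ≤ 1 := fun z w =>
    ⟨Real.rpow_nonneg dist_nonneg _, Real.rpow_le_one dist_nonneg (hdiam z w) hη0.le⟩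
  -- termwise estimate
  have hterm : ∀ ψ : Y → ℝ, (∀ u, 0 ≤ ψ u) →
      (∀ u v, ψ u ≤ Real.exp (R * dist u v ^ η) * ψ v) →
      ∀ x y i, ζ (inv i x) * ψ (inv i x)
        ≤ Real.exp (R' * dist x y ^ η) * (ζ (inv i y) * ψ (inv i y)) := by
    intro ψ h0 h1 x y i
    set xi := inv i x with hxi
    set yi := inv i y with hyi
    have hFx : F xi = x := hinv_right i x
    have hFy : F yi = y := hinv_right i y
    have hd : Λ * dist xi yi ≤ dist x y := by
      have h := hexp i xi (hinv_mem i x) yi (hinv_mem i y)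
      rwa [hFx, hFy] at h
    have hd2 : dist xi yi ≤ dist x y / Λ := by
      rw [le_div_iff₀ hΛ0]; linarith [hd]
    have hdd : dist xi yi ^ η ≤ Λ ^ (-η) * dist x y ^ η := by
      calc dist xi yi ^ η ≤ (dist x y / Λ) ^ η :=
            Real.rpow_le_rpow dist_nonneg hd2 hη0.le
        _ = Λ ^ (-η) * dist x y ^ η := by
            rw [Real.div_rpow dist_nonneg hΛ0.le, Real.rpow_neg hΛ0.le,
              div_eq_inv_mul]
    have hζle : ζ xi ≤ Real.exp (K * dist x y ^ η) * ζ yi := by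
      have h4 := hdist i xi (hinv_mem i x) yi (hinv_mem i y)
      rw [hFx, hFy] at h4
      have h5 : Real.log (ζ xi) ≤ Real.log (ζ yi) + K * dist x y ^ η := by
        have h6 := abs_le.mp h4
        linarith [h6.2]
      calc ζ xi = Real.exp (Real.log (ζ xi)) := (Real.exp_log (hζ xi)).symm
        _ ≤ Real.exp (Real.log (ζ yi) + K * dist x y ^ η) := Real.exp_le_exp.mpr h5
        _ = Real.exp (K * dist x y ^ η) * ζ yi := by
            rw [Real.exp_add, Real.exp_log (hζ yi), mul_comm]
    have hψle : ψ xi ≤ Real.exp (Λ ^ (-η) * R * dist x y ^ η) * ψ yi := by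
      calc ψ xi ≤ Real.exp (R * dist xi yi ^ η) * ψ yi := h1 xi yi
        _ ≤ Real.exp (Λ ^ (-η) * R * dist x y ^ η) * ψ yi := by
            apply mul_le_mul_of_nonneg_right _ (h0 yi)
            apply Real.exp_le_exp.mpr
            calc R * dist xi yi ^ η ≤ R * (Λ ^ (-η) * dist x y ^ η) :=
                mul_le_mul_of_nonneg_left hdd hR.le
              _ = Λ ^ (-η) * R * dist x y ^ η := by ring
    calc ζ xi * ψ xi
        ≤ (Real.exp (K * dist x y ^ η) * ζ yi)
            * (Real.exp (Λ ^ (-η) * R * dist x y ^ η) * ψ yi) :=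
          mul_le_mul hζle hψle (h0 xi)
            (mul_nonneg (Real.exp_pos _).le (hζ yi).le)
      _ = Real.exp (R' * dist x y ^ η) * (ζ yi * ψ yi) := by
          rw [show R' * dist x y ^ η
              = K * dist x y ^ η + Λ ^ (-η) * R * dist x y ^ η by rw [hR'def]; ring,
            Real.exp_add]
          ring
  have hPnn : ∀ ψ : Y → ℝ, (∀ u, 0 ≤ ψ u) → ∀ y, 0 ≤ Pm ψ y := by
    intro ψ h0 y; rw [hPm]
    exact tsum_nonneg fun i => mul_nonneg (hζ _).le (h0 _)
  have htrans : ∀ ψ : Y → ℝ, (∀ u, 0 ≤ ψ u) →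
      (∀ u v, ψ u ≤ Real.exp (R * dist u v ^ η) * ψ v) →
      ∀ x y : Y, Summable (fun i => ζ (inv i x) * ψ (inv i x)) →
        Summable fun i => ζ (inv i y) * ψ (inv i y) := by
    intro ψ h0 h1 x y hs
    exact Summable.of_nonneg_of_le (fun i => mul_nonneg (hζ _).le (h0 _))
      (fun i => hterm ψ h0 h1 y x i) (hs.mul_left _)
  have hAcone : ∀ ψ : Y → ℝ, (∀ u, 0 ≤ ψ u) →
      (∀ u v, ψ u ≤ Real.exp (R * dist u v ^ η) * ψ v) →
      ∀ x y : Y, Pm ψ x ≤ Real.exp (R' * dist x y ^ η) * Pm ψ y := by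
    intro ψ h0 h1 x y
    rw [hPm, hPm]
    by_cases hs : Summable fun i => ζ (inv i y) * ψ (inv i y)
    · have hsx : Summable fun i => ζ (inv i x) * ψ (inv i x) := htrans ψ h0 h1 y x hs
      calc (∑' i, ζ (inv i x) * ψ (inv i x))
          ≤ ∑' i, Real.exp (R' * dist x y ^ η) * (ζ (inv i y) * ψ (inv i y)) :=
            Summable.tsum_le_tsum (fun i => hterm ψ h0 h1 x y i) hsx (hs.mul_left _)
        _ = Real.exp (R' * dist x y ^ η) * ∑' i, ζ (inv i y) * ψ (inv i y) :=
            tsum_mul_left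
    · have hsx : ¬ Summable fun i => ζ (inv i x) * ψ (inv i x) := fun h =>
        hs (htrans ψ h0 h1 x y h)
      rw [tsum_eq_zero_of_not_summable hs, tsum_eq_zero_of_not_summable hsx, mul_zero]
  have hintP : ∀ ψ : Y → ℝ, Integrable ψ m → (∫ y, ψ y ∂m) = 1 →
      Integrable (Pm ψ) m ∧ (∫ y, Pm ψ y ∂m) = 1 := by
    intro ψ hint hI
    have hd := hdual ψ hint
    rw [hI] at hd
    refine ⟨?_, hd⟩
    by_contra hni
    rw [integral_undef hni] at hd
    norm_num at hd
  have hLB : ∀ (r : ℝ) (f : Y → ℝ), 0 ≤ r →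
      (∀ u, 0 ≤ f u) → (∀ u v, f u ≤ Real.exp (r * dist u v ^ η) * f v) →
      Integrable f m → (∫ y, f y ∂m) = 1 →
      ∀ y, Real.exp (-r) ≤ f y ∧ f y ≤ Real.exp r := by
    intro r f hr h0 h1 hint hI y
    have hub : ∀ u v, f u ≤ Real.exp r * f v := by
      intro u v
      calc f u ≤ Real.exp (r * dist u v ^ η) * f v := h1 u v
        _ ≤ Real.exp r * f v := by
            apply mul_le_mul_of_nonneg_right _ (h0 v)
            apply Real.exp_le_exp.mpr
            nlinarith [(ht01 u v).1, (ht01 u v).2]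
    have hmul : Real.exp (-r) * Real.exp r = 1 := by
      rw [← Real.exp_add]; simp
    constructor
    · have h2 : (∫ u, f u ∂m) ≤ ∫ _u, Real.exp r * f y ∂m :=
        integral_mono hint (integrable_const _) (fun u => hub u y)
      rw [hI, integral_const] at h2
      simp only [measure_univ, ENNReal.toReal_one, probReal_univ, one_smul] at h2
      nlinarith [Real.exp_pos r, h0 y]
    · have h2 : (∫ _u, f y ∂m) ≤ ∫ u, Real.exp r * f u ∂m :=
        integral_mono (integrable_const _) (hint.const_mul _) (fun u => hub y u)
      rw [integral_const, integral_const_mul, hI] at h2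
      simpa only [measure_univ, ENNReal.toReal_one, probReal_univ, one_smul, mul_one] using h2
  -- key one-variable inequality
  have hkey : ∀ t q : ℝ, 0 ≤ t → t ≤ 1 → Real.exp (-R') ≤ q →
      Real.exp (R' * t) * q - ξ ≤ Real.exp (R * t) * (q - ξ) := by
    intro t q ht0 ht1 hq
    have hRR' : 0 ≤ R - R' := by linarith
    have e1 : Real.exp (R' * t) * ((R - R') * t)
        ≤ Real.exp (R * t) - Real.exp (R' * t) := by
      have h : Real.exp (R * t) = Real.exp (R' * t) * Real.exp ((R - R') * t) := by
        rw [← Real.exp_add]; ring_nf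
      have h2 : (R - R') * t + 1 ≤ Real.exp ((R - R') * t) := Real.add_one_le_exp _
      nlinarith [Real.exp_pos (R' * t)]
    have hab : 0 ≤ Real.exp (R * t) - Real.exp (R' * t) :=
      le_trans (mul_nonneg (Real.exp_pos _).le (mul_nonneg hRR' ht0)) e1
    have e2 : Real.exp (R * t) - 1 ≤ R * t * Real.exp (R * t) := by
      have h2 : -(R * t) + 1 ≤ Real.exp (-(R * t)) := Real.add_one_le_exp _
      have h3 : Real.exp (-(R * t)) * Real.exp (R * t) = 1 := by
        rw [← Real.exp_add]; simp
      nlinarith [Real.exp_pos (R * t)]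
    have e3 : Real.exp (R * t) ≤ Real.exp (R + R' * (t - 1)) := by
      apply Real.exp_le_exp.mpr
      nlinarith [mul_nonneg hRR' (sub_nonneg.mpr ht1)]
    have e4 : ξ * R * Real.exp R ≤ R - R' := by nlinarith [hRξ]
    have e5 : Real.exp (-R') * Real.exp (R' * t) * Real.exp R
        = Real.exp (R + R' * (t - 1)) := by
      rw [← Real.exp_add, ← Real.exp_add]; congr 1; ring
    have hqnn : 0 ≤ q := le_trans (Real.exp_pos _).le hq
    have chain : ξ * (Real.exp (R * t) - 1) ≤ q * (Real.exp (R * t) - Real.exp (R' * t)) := by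
      calc ξ * (Real.exp (R * t) - 1)
          ≤ ξ * (R * t * Real.exp (R * t)) :=
            mul_le_mul_of_nonneg_left e2 hξ0.le
        _ ≤ ξ * (R * t * Real.exp (R + R' * (t - 1))) := by
            apply mul_le_mul_of_nonneg_left _ hξ0.le
            exact mul_le_mul_of_nonneg_left e3 (mul_nonneg hR.le ht0)
        _ = (ξ * R * Real.exp R) * t * (Real.exp (-R') * Real.exp (R' * t)) := by
            rw [← e5]; ring
        _ ≤ (R - R') * t * (Real.exp (-R') * Real.exp (R' * t)) := by
            apply mul_le_mul_of_nonneg_right _ (mul_nonneg (Real.exp_pos _).le (Real.exp_pos _).le)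
            exact mul_le_mul_of_nonneg_right e4 ht0
        _ = Real.exp (-R') * (Real.exp (R' * t) * ((R - R') * t)) := by ring
        _ ≤ Real.exp (-R') * (Real.exp (R * t) - Real.exp (R' * t)) :=
            mul_le_mul_of_nonneg_left e1 (Real.exp_pos _).le
        _ ≤ q * (Real.exp (R * t) - Real.exp (R' * t)) :=
            mul_le_mul_of_nonneg_right hq hab
    have expand : Real.exp (R * t) * (q - ξ) - (Real.exp (R' * t) * q - ξ)
        = q * (Real.exp (R * t) - Real.exp (R' * t)) - ξ * (Real.exp (R * t) - 1) := by
      ring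
    linarith [chain, expand]
  have hSum : ∀ ψ : Y → ℝ, (∀ u, 0 ≤ ψ u) →
      (∀ u v, ψ u ≤ Real.exp (R * dist u v ^ η) * ψ v) →
      Integrable ψ m → (∫ y, ψ y ∂m) = 1 →
      ∀ y, Summable fun i => ζ (inv i y) * ψ (inv i y) := by
    intro ψ h0 h1 hint hI y
    by_contra hns
    have hall : ∀ v, ¬ Summable fun i => ζ (inv i v) * ψ (inv i v) := by
      intro v hsv
      exact hns (htrans ψ h0 h1 v y hsv)
    have hzero : ∀ v, Pm ψ v = 0 := by
      intro v; rw [hPm]; exact tsum_eq_zero_of_not_summable (hall v)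
    have hd := hdual ψ hint
    rw [hI] at hd
    have h0' : (∫ v, Pm ψ v ∂m) = 0 := by simp [hzero]
    rw [h0'] at hd
    norm_num at hd
  -- the step lemma
  have hstep : ∀ ψ : Y → ℝ, (∀ u, 0 ≤ ψ u) →
      (∀ u v, ψ u ≤ Real.exp (R * dist u v ^ η) * ψ v) →
      Integrable ψ m → (∫ y, ψ y ∂m) = 1 →
      ∃ ψ' : Y → ℝ, (∀ u, 0 ≤ ψ' u) ∧
        (∀ u v, ψ' u ≤ Real.exp (R * dist u v ^ η) * ψ' v) ∧
        Integrable ψ' m ∧ (∫ y, ψ' y ∂m) = 1 ∧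
        (∀ y, Summable fun i => ζ (inv i y) * ψ (inv i y)) ∧
        (∀ y, Pm ψ y = ξ + (1 - ξ) * ψ' y) := by
    intro ψ h0 h1 hint hI
    obtain ⟨hPint, hPI⟩ := hintP ψ hint hI
    have hcone' : ∀ u v, Pm ψ u ≤ Real.exp (R' * dist u v ^ η) * Pm ψ v :=
      hAcone ψ h0 h1
    have hq : ∀ y, Real.exp (-R') ≤ Pm ψ y := fun y =>
      ((hLB R' (Pm ψ) hR'0.le (hPnn ψ h0) hcone' hPint hPI) y).1
    have hξq : ∀ y, ξ < Pm ψ y := by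
      intro y
      have h2 : Real.exp (-R) ≤ Real.exp (-R') := Real.exp_le_exp.mpr (by linarith)
      linarith [hq y, hξe]
    have hne : (1:ℝ) - ξ ≠ 0 := by linarith
    have hpos : (0:ℝ) < 1 - ξ := by linarith
    refine ⟨fun y => (1 - ξ)⁻¹ * (Pm ψ y - ξ), ?_, ?_, ?_, ?_, hSum ψ h0 h1 hint hI, ?_⟩
    · intro u
      exact mul_nonneg (inv_nonneg.mpr hpos.le) (by linarith [hξq u])
    · intro u v
      have hkey' : Pm ψ u - ξ ≤ Real.exp (R * dist u v ^ η) * (Pm ψ v - ξ) := by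
        have h2 : Pm ψ u ≤ Real.exp (R' * dist u v ^ η) * Pm ψ v := hcone' u v
        have h3 := hkey (dist u v ^ η) (Pm ψ v) (ht01 u v).1 (ht01 u v).2 (hq v)
        linarith
      calc (1 - ξ)⁻¹ * (Pm ψ u - ξ)
          ≤ (1 - ξ)⁻¹ * (Real.exp (R * dist u v ^ η) * (Pm ψ v - ξ)) :=
            mul_le_mul_of_nonneg_left hkey' (inv_nonneg.mpr hpos.le)
        _ = Real.exp (R * dist u v ^ η) * ((1 - ξ)⁻¹ * (Pm ψ v - ξ)) := by ring
    · exact ((hPint.sub (integrable_const ξ)).const_mul _)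
    · rw [integral_const_mul, integral_sub hPint (integrable_const ξ), hPI, integral_const]
      simp only [measure_univ, ENNReal.toReal_one, probReal_univ, one_smul, smul_eq_mul, one_mul]
      exact inv_mul_cancel₀ hne
    · intro y
      rw [← mul_assoc, mul_inv_cancel₀ hne, one_mul]
      ring
  -- pointwise bound on φ
  have hφbnd : ∀ u, |φ u| ≤ Hφ := by
    intro u
    have h1 : φ u = ∫ y, (φ u - φ y) ∂m := by
      rw [integral_sub (integrable_const _) hφint, hmean, integral_const]
      simp [measure_univ]
    rw [h1]
    have habsint : |∫ y, (φ u - φ y) ∂m| ≤ ∫ y, |φ u - φ y| ∂m := by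
      simpa [Real.norm_eq_abs] using
        norm_integral_le_integral_norm (μ := m) (fun y => φ u - φ y)
    calc |∫ y, (φ u - φ y) ∂m| ≤ ∫ y, |φ u - φ y| ∂m := habsint
      _ ≤ ∫ _y, Hφ ∂m := by
          apply integral_mono ((integrable_const (φ u)).sub hφint).abs (integrable_const _)
          intro y
          calc |φ u - φ y| ≤ Hφ * dist u y ^ η := hφ u y
            _ ≤ Hφ * 1 := mul_le_mul_of_nonneg_left (ht01 u y).2 hHφ
            _ = Hφ := mul_one Hφ
      _ = Hφ := by simp [measure_univ]
  intro n hn x z w hzw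
  rcases eq_or_lt_of_le hHφ with hH0 | hHpos
  · -- degenerate case Hφ = 0
    have hφ0 : ∀ u, φ u = 0 := by
      intro u
      have h2 : |φ u| ≤ 0 := le_of_le_of_eq (hφbnd u) hH0.symm
      exact abs_nonpos_iff.mp h2
    have hiter : ∀ k (u : Y), (Pm^[k] φ) u = 0 := by
      intro k
      induction k with
      | zero => intro u; simpa using hφ0 u
      | succ k ih =>
        intro u
        rw [Function.iterate_succ_apply', hPm]
        have h3 : (fun i => ζ (inv i u) * (Pm^[k] φ) (inv i u)) = fun _ => (0:ℝ) := by
          funext i; rw [ih]; ring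
        rw [h3, tsum_zero]
    rw [hiter n x, hiter n z, hiter n w]
    rw [← hH0]
    simp
  -- main case Hφ > 0
  set b : ℝ := Hφ * (R + 1) / R with hbdef
  have hb0 : 0 < b := div_pos (mul_pos hHpos (by linarith)) hR
  have hbH : b - Hφ = Hφ / R := by
    rw [hbdef]; field_simp; ring
  have hmain : ∀ k : ℕ, ∃ g1 g2 : Y → ℝ,
      ((∀ u, 0 ≤ g1 u) ∧ (∀ u v, g1 u ≤ Real.exp (R * dist u v ^ η) * g1 v) ∧
        Integrable g1 m ∧ (∫ y, g1 y ∂m) = 1) ∧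
      ((∀ u, 0 ≤ g2 u) ∧ (∀ u v, g2 u ≤ Real.exp (R * dist u v ^ η) * g2 v) ∧
        Integrable g2 m ∧ (∫ y, g2 y ∂m) = 1) ∧
      ∀ u, (Pm^[k] φ) u = b * (1 - ξ) ^ k * (g1 u - g2 u) := by
    intro k
    induction k with
    | zero =>
      have hfl : ∀ v, Hφ / R ≤ φ v + b := by
        intro v
        have h2 := (abs_le.mp (hφbnd v)).1
        linarith [hbH]
      refine ⟨fun u => (φ u + b) / b, fun _ => 1, ⟨?_, ?_, ?_, ?_⟩, ⟨?_, ?_, ?_, ?_⟩, ?_⟩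
      · intro u
        apply div_nonneg _ hb0.le
        have := hfl u
        have hHR : 0 ≤ Hφ / R := div_nonneg hHφ hR.le
        linarith
      · intro u v
        have ht0 := (ht01 u v).1
        have h2 : φ u - φ v ≤ Hφ * dist u v ^ η := le_of_abs_le (hφ u v)
        have hE := Real.add_one_le_exp (R * dist u v ^ η)
        have hfl0 : 0 ≤ φ v + b := le_trans (div_nonneg hHφ hR.le) (hfl v)
        have hmulgoal : φ u + b ≤ Real.exp (R * dist u v ^ η) * (φ v + b) := by
          have step1 : (1 + R * dist u v ^ η) * (φ v + b)
              ≤ Real.exp (R * dist u v ^ η) * (φ v + b) :=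
            mul_le_mul_of_nonneg_right (by linarith) hfl0
          have step2 : Hφ * dist u v ^ η ≤ (R * dist u v ^ η) * (φ v + b) := by
            have h3 := mul_le_mul_of_nonneg_left (hfl v) (mul_nonneg hR.le ht0)
            have h4 : (R * dist u v ^ η) * (Hφ / R) = Hφ * dist u v ^ η := by
              field_simp
            linarith
          nlinarith [hfl0]
        rw [← mul_div_assoc, div_le_div_iff₀ hb0 hb0]
        exact mul_le_mul_of_nonneg_right hmulgoal hb0.le
      · exact (hφint.add (integrable_const b)).div_const b
      · rw [integral_div, integral_add hφint (integrable_const b), hmean, integral_const]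
        simp only [measure_univ, ENNReal.toReal_one, probReal_univ, one_smul, zero_add]
        exact div_self hb0.ne'
      · intro u; norm_num
      · intro u v
        have := Real.add_one_le_exp (R * dist u v ^ η)
        have := mul_nonneg hR.le (ht01 u v).1
        simpa using by linarith
      · exact integrable_const 1
      · simp [measure_univ]
      · intro u
        simp only [Function.iterate_zero_apply, pow_zero, mul_one]
        field_simp
        ring
    | succ k ih =>
      obtain ⟨g1, g2, ⟨h10, h11, h12, h13⟩, ⟨h20, h21, h22, h23⟩, hrep⟩ := ih
      obtain ⟨p1, hp10, hp11, hp12, hp13, hsum1, heq1⟩ := hstep g1 h10 h11 h12 h13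
      obtain ⟨p2, hp20, hp21, hp22, hp23, hsum2, heq2⟩ := hstep g2 h20 h21 h22 h23
      refine ⟨p1, p2, ⟨hp10, hp11, hp12, hp13⟩, ⟨hp20, hp21, hp22, hp23⟩, ?_⟩
      intro u
      rw [Function.iterate_succ_apply', hPm]
      have hrw : (fun i => ζ (inv i u) * (Pm^[k] φ) (inv i u))
          = fun i => (b * (1 - ξ) ^ k) * (ζ (inv i u) * g1 (inv i u))
            - (b * (1 - ξ) ^ k) * (ζ (inv i u) * g2 (inv i u)) := by
        funext i; rw [hrep (inv i u)]; ring
      rw [hrw, Summable.tsum_sub ((hsum1 u).mul_left _) ((hsum2 u).mul_left _),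
        tsum_mul_left, tsum_mul_left, ← hPm, ← hPm, heq1 u, heq2 u]
      ring
  obtain ⟨g1, g2, ⟨h10, h11, h12, h13⟩, ⟨h20, h21, h22, h23⟩, hrep⟩ := hmain n
  have hB1 := hLB R g1 hR.le h10 h11 h12 h13
  have hB2 := hLB R g2 hR.le h20 h21 h22 h23
  have hsup : ∀ u, |g1 u - g2 u| ≤ 2 * R * Real.exp R := by
    intro u
    have h1 := (hB1 u).1; have h2 := (hB1 u).2
    have h3 := (hB2 u).1; have h4 := (hB2 u).2
    have h5 : Real.exp R - Real.exp (-R) ≤ 2 * R * Real.exp R := by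
      have h6 := Real.add_one_le_exp (-(2 * R))
      have h7 : Real.exp (-(2 * R)) * Real.exp R = Real.exp (-R) := by
        rw [← Real.exp_add]; congr 1; ring
      nlinarith [Real.exp_pos R]
    rw [abs_le]
    constructor <;> linarith
  have hhol : ∀ g : Y → ℝ, (∀ u, 0 ≤ g u) →
      (∀ u v, g u ≤ Real.exp (R * dist u v ^ η) * g v) →
      (∀ u, g u ≤ Real.exp R) →
      |g z - g w| ≤ R * Real.exp R * dist z w ^ η := by
    intro g hg0 hg1 hg2
    have key : ∀ u v : Y, g u - g v ≤ R * Real.exp R * dist u v ^ η := by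
      intro u v
      have ht0 := (ht01 u v).1
      have h1 : g u ≤ Real.exp (R * dist u v ^ η) * g v := hg1 u v
      have hE := Real.add_one_le_exp (-(R * dist u v ^ η))
      have hEE : Real.exp (-(R * dist u v ^ η)) * Real.exp (R * dist u v ^ η) = 1 := by
        rw [← Real.exp_add]; simp
      have hle1 : Real.exp (-(R * dist u v ^ η)) ≤ 1 := by
        calc Real.exp (-(R * dist u v ^ η)) ≤ Real.exp 0 :=
            Real.exp_le_exp.mpr (by nlinarith [mul_nonneg hR.le ht0])
          _ = 1 := Real.exp_zero
      have h2 : Real.exp (-(R * dist u v ^ η)) * g u ≤ g v := by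
        have h3 := mul_le_mul_of_nonneg_left h1 (Real.exp_pos (-(R * dist u v ^ η))).le
        rw [← mul_assoc, hEE, one_mul] at h3
        exact h3
      calc g u - g v ≤ g u - Real.exp (-(R * dist u v ^ η)) * g u := by linarith
        _ = g u * (1 - Real.exp (-(R * dist u v ^ η))) := by ring
        _ ≤ Real.exp R * (1 - Real.exp (-(R * dist u v ^ η))) :=
            mul_le_mul_of_nonneg_right (hg2 u) (by linarith)
        _ ≤ Real.exp R * (R * dist u v ^ η) :=
            mul_le_mul_of_nonneg_left (by linarith) (Real.exp_pos R).le
        _ = R * Real.exp R * dist u v ^ η := by ring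
    have h1 := key z w
    have h2 := key w z
    rw [dist_comm w z] at h2
    rw [abs_le]
    constructor <;> linarith
  have hc0 : (0:ℝ) < (1 - ξ) ^ n := pow_pos (by linarith) n
  have hbc : (0:ℝ) < b * (1 - ξ) ^ n := mul_pos hb0 hc0
  have hdzw : 0 < dist z w ^ η := Real.rpow_pos_of_pos (dist_pos.mpr hzw) η
  rw [hrep x, hrep z, hrep w]
  have e1 : |b * (1 - ξ) ^ n * (g1 x - g2 x)|
      ≤ b * (1 - ξ) ^ n * (2 * R * Real.exp R) := by
    rw [abs_mul, abs_of_nonneg hbc.le]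
    exact mul_le_mul_of_nonneg_left (hsup x) hbc.le
  have e2 : |b * (1 - ξ) ^ n * (g1 z - g2 z) - b * (1 - ξ) ^ n * (g1 w - g2 w)|
      ≤ b * (1 - ξ) ^ n * (2 * R * Real.exp R) * dist z w ^ η := by
    have hh1 := hhol g1 h10 h11 (fun u => (hB1 u).2)
    have hh2 := hhol g2 h20 h21 (fun u => (hB2 u).2)
    have hre : b * (1 - ξ) ^ n * (g1 z - g2 z) - b * (1 - ξ) ^ n * (g1 w - g2 w)
        = b * (1 - ξ) ^ n * ((g1 z - g1 w) - (g2 z - g2 w)) := by ring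
    rw [hre, abs_mul, abs_of_nonneg hbc.le]
    have habs : |(g1 z - g1 w) - (g2 z - g2 w)| ≤ 2 * R * Real.exp R * dist z w ^ η := by
      calc |(g1 z - g1 w) - (g2 z - g2 w)| ≤ |g1 z - g1 w| + |g2 z - g2 w| :=
          abs_sub _ _
        _ ≤ R * Real.exp R * dist z w ^ η + R * Real.exp R * dist z w ^ η :=
          add_le_add hh1 hh2
        _ = 2 * R * Real.exp R * dist z w ^ η := by ring
    calc b * (1 - ξ) ^ n * |(g1 z - g1 w) - (g2 z - g2 w)|
        ≤ b * (1 - ξ) ^ n * (2 * R * Real.exp R * dist z w ^ η) :=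
          mul_le_mul_of_nonneg_left habs hbc.le
      _ = b * (1 - ξ) ^ n * (2 * R * Real.exp R) * dist z w ^ η := by ring
  have e2' : |b * (1 - ξ) ^ n * (g1 z - g2 z) - b * (1 - ξ) ^ n * (g1 w - g2 w)|
      / dist z w ^ η ≤ b * (1 - ξ) ^ n * (2 * R * Real.exp R) :=
    (div_le_iff₀ hdzw).mpr e2
  have hfinal : b * (1 - ξ) ^ n * (2 * R * Real.exp R)
      + b * (1 - ξ) ^ n * (2 * R * Real.exp R)
      = 4 * Real.exp R * (1 + R) * (1 - ξ) ^ n * Hφ := by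
    rw [hbdef]
    field_simp
    ring
  linarith [e1, e2']
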